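/- arXiv:1804.03686 — 5 statements merged into one kernel-verified Lean document; each statement's English description precedes it below -/
import Mathlib

section
/- For any permutation class C and every n ≥ 0, |C^rc_{2n}| ≤ 2^n · |C_n|; consequently limsup_{n→∞} |C^rc_{2n}|^{1/n} ≤ 2 · limsup_{n→∞} |C_n|^{1/n} and liminf_{n→∞} |C^rc_{2n}|^{1/n} ≤ 2 · liminf_{n→∞} |C_n|^{1/n}. -/
open Filter Topology

/-- `π` contains `σ` as a pattern. -/
def PermContains {n m : ℕ} (π : Equiv.Perm (Fin n)) (σ : Equiv.Perm (Fin m)) : Prop :=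
  ∃ f : Fin m → Fin n, StrictMono f ∧ ∀ i j : Fin m, σ i < σ j ↔ π (f i) < π (f j)

/-- A permutation class: downward closed under pattern containment. -/
def IsPermClass (C : ∀ n : ℕ, Set (Equiv.Perm (Fin n))) : Prop :=
  ∀ (m n : ℕ) (σ : Equiv.Perm (Fin m)) (π : Equiv.Perm (Fin n)),
    π ∈ C n → PermContains π σ → σ ∈ C m

/-- The reverse–complement of a permutation. -/
def rcPerm {n : ℕ} (π : Equiv.Perm (Fin n)) : Equiv.Perm (Fin n) :=
  (Fin.revPerm.trans π).trans Fin.revPerm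

/-- A class is rc-invariant if `rc(C) = C`. -/
def RCInvariant (C : ∀ n : ℕ, Set (Equiv.Perm (Fin n))) : Prop :=
  ∀ n : ℕ, rcPerm '' (C n) = C n

/-- `|C_n|`. -/
noncomputable def classCount (C : ∀ n : ℕ, Set (Equiv.Perm (Fin n))) (n : ℕ) : ℕ :=
  (C n).ncard

/-- `|C^rc_{2n}|`, the number of centrosymmetric permutations of size `2n` in `C`. -/
noncomputable def rcCount (C : ∀ n : ℕ, Set (Equiv.Perm (Fin n))) (n : ℕ) : ℕ :=
  {π ∈ C (2 * n) | rcPerm π = π}.ncard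

/-- The sequence `n ↦ (f n)^(1/n)`, valued in `ℝ≥0∞`. -/
noncomputable def growthSeq (f : ℕ → ℕ) (n : ℕ) : ENNReal :=
  (f n : ENNReal) ^ ((n : ℝ)⁻¹)

-- auxiliary defs
variable {n : ℕ}

def emb (n : ℕ) : Fin n → Fin (2 * n) := fun i => ⟨i.1, by omega⟩

def gmap (π : Equiv.Perm (Fin (2 * n))) : Fin n → Fin (2 * n) := fun i => π (emb n i)

lemma gmap_inj (π : Equiv.Perm (Fin (2 * n))) : Function.Injective (gmap π) := by
  intro i j h
  have := π.injective h
  simpa [emb, Fin.ext_iff] using congrArg Fin.val this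

def Sfin (π : Equiv.Perm (Fin (2 * n))) : Finset (Fin (2 * n)) :=
  Finset.image (gmap π) Finset.univ

lemma card_Sfin (π : Equiv.Perm (Fin (2 * n))) : (Sfin π).card = n := by
  rw [Sfin, Finset.card_image_of_injective _ (gmap_inj π)]
  simp

lemma mem_Sfin (π : Equiv.Perm (Fin (2 * n))) (i : Fin n) : gmap π i ∈ Sfin π := by
  simp [Sfin]

noncomputable def sigmaOf (π : Equiv.Perm (Fin (2 * n))) : Equiv.Perm (Fin n) :=
  Equiv.ofBijective
    (fun i => ((Sfin π).orderIsoOfFin (card_Sfin π)).symm ⟨gmap π i, mem_Sfin π i⟩)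
    (by
      apply Finite.injective_iff_bijective.mp
      intro i j h
      apply gmap_inj π
      have := ((Sfin π).orderIsoOfFin (card_Sfin π)).symm.injective h
      exact congrArg Subtype.val this)

lemma gmap_eq (π : Equiv.Perm (Fin (2 * n))) (i : Fin n) :
    gmap π i = ((Sfin π).orderIsoOfFin (card_Sfin π) (sigmaOf π i) : Fin (2 * n)) := by
  simp [sigmaOf, Equiv.ofBijective_apply]

lemma sigmaOf_pattern (π : Equiv.Perm (Fin (2 * n))) (i j : Fin n) :
    sigmaOf π i < sigmaOf π j ↔ π (emb n i) < π (emb n j) := by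
  show ((Sfin π).orderIsoOfFin (card_Sfin π)).symm _ < ((Sfin π).orderIsoOfFin (card_Sfin π)).symm _ ↔ _
  rw [OrderIso.lt_iff_lt]
  exact Iff.rfl

lemma contains_sigmaOf (π : Equiv.Perm (Fin (2 * n))) : PermContains π (sigmaOf π) :=
  ⟨emb n, fun i j h => h, sigmaOf_pattern π⟩

theorem test (π : Equiv.Perm (Fin (2*n))) : True := trivial

lemma rc_apply {π : Equiv.Perm (Fin (2 * n))} (h : rcPerm π = π) (j : Fin (2 * n)) :
    π (Fin.rev j) = Fin.rev (π j) := by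
  have := congrFun (congrArg (fun e => (e : Equiv.Perm (Fin (2*n))).toFun) h) j
  simp only [rcPerm, Equiv.toFun_as_coe, Equiv.trans_apply, Fin.revPerm_apply] at this
  rw [← this, Fin.rev_rev]

lemma symm_rc_apply {π : Equiv.Perm (Fin (2 * n))} (h : rcPerm π = π) (j : Fin (2 * n)) :
    π.symm (Fin.rev j) = Fin.rev (π.symm j) := by
  apply π.injective
  rw [Equiv.apply_symm_apply, rc_apply h, Equiv.apply_symm_apply]

lemma mem_Sfin_iff (π : Equiv.Perm (Fin (2 * n))) (j : Fin (2 * n)) :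
    j ∈ Sfin π ↔ (π.symm j).1 < n := by
  constructor
  · rintro hj
    simp only [Sfin, Finset.mem_image, Finset.mem_univ, true_and] at hj
    obtain ⟨i, hi⟩ := hj
    rw [← hi]
    simp only [gmap, Equiv.symm_apply_apply, emb]
    exact i.isLt
  · intro hj
    have : j = gmap π ⟨(π.symm j).1, hj⟩ := by
      simp only [gmap, emb]
      rw [show (⟨(π.symm j).1, by omega⟩ : Fin (2*n)) = π.symm j from rfl]
      simp
    rw [this]; exact mem_Sfin π _

lemma rev_mem_Sfin {π : Equiv.Perm (Fin (2 * n))} (h : rcPerm π = π) (j : Fin (2 * n)) :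
    Fin.rev j ∈ Sfin π ↔ j ∉ Sfin π := by
  rw [mem_Sfin_iff, mem_Sfin_iff, symm_rc_apply h]
  have h1 : (π.symm j).1 < 2 * n := (π.symm j).isLt
  rw [Fin.val_rev]
  omega

set_option maxHeartbeats 1000000 in
lemma main_count (C : ∀ n : ℕ, Set (Equiv.Perm (Fin n))) (hC : IsPermClass C) (n : ℕ) :
    rcCount C n ≤ 2 ^ n * classCount C n := by
  classical
  set s : Set (Equiv.Perm (Fin (2 * n))) := {π ∈ C (2 * n) | rcPerm π = π} with hs
  have hrcC : rcCount C n = Nat.card s := by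
    rw [rcCount, ← Nat.card_coe_set_eq]
  have hcC : classCount C n = Nat.card (C n) := by
    rw [classCount, ← Nat.card_coe_set_eq]
  set F : s → (Fin n → Bool) × (C n) := fun π =>
    (fun k => decide (emb n k ∈ Sfin (π : Equiv.Perm (Fin (2*n)))),
     ⟨sigmaOf (π : Equiv.Perm (Fin (2*n))),
      hC n (2*n) _ _ π.2.1 (contains_sigmaOf _)⟩) with hF
  have hFinj : Function.Injective F := by
    rintro ⟨π1, hπ1⟩ ⟨π2, hπ2⟩ heq
    simp only [hF, Prod.mk.injEq, Subtype.mk.injEq] at heq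
    obtain ⟨hb, hσ⟩ := heq
    -- the images agree
    have hmemlt : ∀ j : Fin (2*n), j.1 < n → (j ∈ Sfin π1 ↔ j ∈ Sfin π2) := by
      intro j hj
      have := congrFun hb ⟨j.1, hj⟩
      rw [show emb n ⟨j.1, hj⟩ = j from rfl] at this
      simpa [decide_eq_decide] using this
    have hS : Sfin π1 = Sfin π2 := by
      ext j
      rcases lt_or_ge j.1 n with hj | hj
      · exact hmemlt j hj
      · have hrev : (Fin.rev j).1 < n := by
          have := j.isLt; rw [Fin.val_rev]; omega
        have e1 := rev_mem_Sfin hπ1.2 j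
        have e2 := rev_mem_Sfin hπ2.2 j
        have e3 := hmemlt (Fin.rev j) hrev
        tauto
    -- first halves agree
    have hfirst : ∀ i : Fin n, π1 (emb n i) = π2 (emb n i) := by
      intro i
      have k1 : π1 (emb n i) = gmap π1 i := rfl
      have k2 : π2 (emb n i) = gmap π2 i := rfl
      rw [k1, k2, gmap_eq, gmap_eq, hσ]
      have key : ∀ (S : Finset (Fin (2*n))) (hcard : S.card = n), S = Sfin π2 →
          ((S.orderIsoOfFin hcard (sigmaOf π2 i)) : Fin (2*n)) =
          ((Sfin π2).orderIsoOfFin (card_Sfin π2) (sigmaOf π2 i) : Fin (2*n)) := by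
        rintro S hcard rfl; rfl
      exact key _ _ hS
    have : π1 = π2 := by
      ext j
      rcases lt_or_ge j.1 n with hj | hj
      · have : j = emb n ⟨j.1, hj⟩ := rfl
        rw [this, hfirst]
      · have hrev : (Fin.rev j).1 < n := by
          have := j.isLt; rw [Fin.val_rev]; omega
        have : j = Fin.rev (Fin.rev j) := (Fin.rev_rev j).symm
        rw [this, rc_apply hπ1.2, rc_apply hπ2.2]
        congr 1
        have : Fin.rev j = emb n ⟨(Fin.rev j).1, hrev⟩ := rfl
        rw [this, hfirst]
    exact Subtype.ext this
  have := Nat.card_le_card_of_injective F hFinj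
  rw [Nat.card_prod, Nat.card_eq_fintype_card (α := Fin n → Bool)] at this
  simpa [hrcC, hcC] using this

lemma growth_le (C : ∀ n : ℕ, Set (Equiv.Perm (Fin n))) (hC : IsPermClass C) :
    ∀ᶠ n in atTop, growthSeq (rcCount C) n ≤ 2 * growthSeq (classCount C) n := by
  filter_upwards [eventually_ge_atTop 1] with n hn
  have hn0 : (n : ℝ) ≠ 0 := by positivity
  have h1 := main_count C hC n
  unfold growthSeq
  calc (rcCount C n : ENNReal) ^ ((n:ℝ)⁻¹)
      ≤ ((2^n * classCount C n : ℕ) : ENNReal) ^ ((n:ℝ)⁻¹) :=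
        ENNReal.rpow_le_rpow (by exact_mod_cast h1) (by positivity)
    _ = 2 * (classCount C n : ENNReal) ^ ((n:ℝ)⁻¹) := by
        push_cast
        rw [ENNReal.mul_rpow_of_nonneg _ _ (by positivity)]
        congr 1
        rw [← ENNReal.rpow_natCast 2 n, ← ENNReal.rpow_mul,
          mul_inv_cancel₀ hn0, ENNReal.rpow_one]

theorem stmt1 (C : ∀ n : ℕ, Set (Equiv.Perm (Fin n))) (hC : IsPermClass C) :
    (∀ n : ℕ, rcCount C n ≤ 2 ^ n * classCount C n) ∧
    Filter.limsup (growthSeq (rcCount C)) Filter.atTop ≤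
      2 * Filter.limsup (growthSeq (classCount C)) Filter.atTop ∧
    Filter.liminf (growthSeq (rcCount C)) Filter.atTop ≤
      2 * Filter.liminf (growthSeq (classCount C)) Filter.atTop := by
  refine ⟨main_count C hC, ?_, ?_⟩
  · calc Filter.limsup (growthSeq (rcCount C)) atTop
        ≤ Filter.limsup (fun n => 2 * growthSeq (classCount C) n) atTop :=
          Filter.limsup_le_limsup (growth_le C hC)
      _ = 2 * Filter.limsup (growthSeq (classCount C)) atTop :=
          ENNReal.limsup_const_mul_of_ne_top (by simp)
  · calc Filter.liminf (growthSeq (rcCount C)) atTop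
        ≤ Filter.liminf ((fun _ => 2) * growthSeq (classCount C)) atTop :=
          Filter.liminf_le_liminf (growth_le C hC)
      _ ≤ Filter.limsup (fun _ : ℕ => (2:ENNReal)) atTop *
            Filter.liminf (growthSeq (classCount C)) atTop :=
          ENNReal.liminf_mul_le (by rw [limsup_const]; exact Or.inl two_ne_zero)
            (by rw [limsup_const]; exact Or.inl ENNReal.ofNat_ne_top)
      _ = 2 * Filter.liminf (growthSeq (classCount C)) atTop := by rw [limsup_const]
end

section
/- If C is a permutation class whose upper growth rate limsup_{n→∞} |C_n|^{1/n} equals 0 or 1, then both lim_{n→∞} |C_n|^{1/n} and lim_{n→∞} |C^rc_{2n}|^{1/n} exist and these two limits are equal. -/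
open Filter Topology

section ES

variable {α : Type*} [LinearOrder α] {β : Type*}

open Function Finset in
/-- **Erdős–Szekeres Theorem** (copied from the Mathlib Archive). -/
theorem my_erdos_szekeres {r s n : ℕ} {f : Fin n → α} (hn : r * s < n) (hf : Function.Injective f) :
    (∃ t : Finset (Fin n), r < t.card ∧ StrictMonoOn f ↑t) ∨
      ∃ t : Finset (Fin n), s < t.card ∧ StrictAntiOn f ↑t := by
  let inc_sequences_ending_in : Fin n → Finset (Finset (Fin n)) := fun i =>
    univ.powerset.filter fun t => Finset.max t = i ∧ StrictMonoOn f ↑t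
  let dec_sequences_ending_in : Fin n → Finset (Finset (Fin n)) := fun i =>
    univ.powerset.filter fun t => Finset.max t = i ∧ StrictAntiOn f ↑t
  have inc_i : ∀ i, {i} ∈ inc_sequences_ending_in i := fun i => by
    simp [inc_sequences_ending_in, StrictMonoOn]
  have dec_i : ∀ i, {i} ∈ dec_sequences_ending_in i := fun i => by
    simp [dec_sequences_ending_in, StrictAntiOn]
  let ab' : Fin n → ℕ × ℕ := by
    intro i
    apply
      (max' ((inc_sequences_ending_in i).image card) (Nonempty.image ⟨{i}, inc_i i⟩ _),
        max' ((dec_sequences_ending_in i).image card) (Nonempty.image ⟨{i}, dec_i i⟩ _))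
  generalize hab : ab' = ab
  rsuffices ⟨i, hi⟩ : ∃ i, r < (ab i).1 ∨ s < (ab i).2
  · refine Or.imp ?_ ?_ hi
    on_goal 1 =>
      have : (ab i).1 ∈ image card (inc_sequences_ending_in i) := by
        simp only [← hab]; exact max'_mem _ (Nonempty.image ⟨{i}, inc_i i⟩ _)
    on_goal 2 =>
      have : (ab i).2 ∈ image card (dec_sequences_ending_in i) := by
        simp only [← hab]; exact max'_mem _ (Nonempty.image ⟨{i}, dec_i i⟩ _)
    all_goals
      intro hi
      rw [mem_image] at this
      obtain ⟨t, ht₁, ht₂⟩ := this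
      refine ⟨t, by rwa [ht₂], ?_⟩
      rw [mem_filter] at ht₁
      apply ht₁.2.2
  have : Injective ab := by
    simp only [← hab]
    apply Injective.of_lt_imp_ne
    intro i j k q
    injection q with q₁ q₂
    cases lt_or_gt_of_ne fun _ => ne_of_lt ‹i < j› (hf ‹f i = f j›)
    on_goal 1 =>
      apply ne_of_lt _ q₁
      have : (ab' i).1 ∈ image card (inc_sequences_ending_in i) := by exact max'_mem _ (Nonempty.image ⟨{i}, inc_i i⟩ _)
    on_goal 2 =>
      apply ne_of_lt _ q₂
      have : (ab' i).2 ∈ image card (dec_sequences_ending_in i) := by exact max'_mem _ (Nonempty.image ⟨{i}, dec_i i⟩ _)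
    all_goals
      rw [Nat.lt_iff_add_one_le]
      apply le_max'
      rw [mem_image] at this ⊢
      rcases this with ⟨t, ht₁, ht₂⟩
      rw [mem_filter] at ht₁
      have : t.max = i := by simp only [ht₁.2.1]
      refine ⟨insert j t, ?_, ?_⟩
      · rw [mem_filter]
        refine ⟨?_, ?_, ?_⟩
        · rw [mem_powerset]; apply subset_univ
        · convert max_insert (a := j) (s := t)
          rw [ht₁.2.1, max_eq_left]
          apply WithBot.coe_le_coe.mpr (le_of_lt ‹i < j›)
        simp only [StrictMonoOn, StrictAntiOn, coe_insert, Set.mem_insert_iff, mem_coe]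
        rintro x ⟨rfl | _⟩ y ⟨rfl | _⟩ _
        · apply (irrefl _ ‹j < j›).elim
        · exfalso
          apply not_le_of_gt (_root_.trans ‹i < j› ‹j < y›) (le_max_of_eq ‹y ∈ t› ‹t.max = i›)
        · first
          | apply lt_of_le_of_lt _ ‹f i < f j›
          | apply lt_of_lt_of_le ‹f j < f i› _
          rcases lt_or_eq_of_le (le_max_of_eq ‹x ∈ t› ‹t.max = i›) with (_ | rfl)
          · apply le_of_lt (ht₁.2.2 ‹x ∈ t› (mem_of_max ‹t.max = i›) ‹x < i›)
          · rfl
        · apply ht₁.2.2 ‹x ∈ t› ‹y ∈ t› ‹x < y›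
      · rw [card_insert_of_notMem, ht₂]
        intro
        apply not_le_of_gt ‹i < j› (le_max_of_eq ‹j ∈ t› ‹t.max = i›)
  by_contra! q
  let ran : Finset (ℕ × ℕ) := (range r).image Nat.succ ×ˢ (range s).image Nat.succ
  have : image ab univ ⊆ ran := by
    rintro ⟨x₁, x₂⟩
    simp only [ran, mem_image, exists_prop, mem_range, mem_univ, mem_product, true_and,
      Prod.ext_iff]
    rintro ⟨i, rfl, rfl⟩
    specialize q i
    have z : 1 ≤ (ab i).1 ∧ 1 ≤ (ab i).2 := by
      simp only [← hab]
      constructor <;>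
        · apply le_max'
          rw [mem_image]
          exact ⟨{i}, by solve_by_elim, card_singleton i⟩
    exact ⟨⟨(ab i).1 - 1, by omega⟩, (ab i).2 - 1, by omega⟩
  apply not_le_of_gt hn
  simpa [ran, Nat.succ_injective, card_image_of_injective, ‹Injective ab›] using card_le_card this

end ES

/-- Every permutation contains a pattern of each smaller size. -/
lemma exists_pattern_of_le {n m : ℕ} (π : Equiv.Perm (Fin n)) (h : m ≤ n) :
    ∃ σ : Equiv.Perm (Fin m), PermContains π σ := by
  classical
  set g : Fin m → Fin n := fun i => π (Fin.castLE h i) with hg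
  have hginj : Function.Injective g :=
    π.injective.comp (Fin.strictMono_castLE h).injective
  set S : Finset (Fin n) := Finset.univ.image g with hS
  have hcard : S.card = m := by
    rw [hS, Finset.card_image_of_injective _ hginj, Finset.card_univ, Fintype.card_fin]
  set e := S.orderIsoOfFin hcard with he
  have hmem : ∀ i, g i ∈ S := fun i => Finset.mem_image_of_mem _ (Finset.mem_univ i)
  set τ : Fin m → Fin m := fun i => e.symm ⟨g i, hmem i⟩ with hτ
  have hτinj : Function.Injective τ := by
    intro i j hij
    apply hginj
    exact congrArg Subtype.val (e.symm.injective hij)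
  have hτbij : Function.Bijective τ := Finite.injective_iff_bijective.mp hτinj
  refine ⟨Equiv.ofBijective τ hτbij, Fin.castLE h, Fin.strictMono_castLE h, ?_⟩
  intro i j
  show τ i < τ j ↔ _
  rw [hτ]
  exact (e.symm.lt_iff_lt.trans Subtype.mk_lt_mk).trans Iff.rfl

lemma rcPerm_one {k : ℕ} : rcPerm (1 : Equiv.Perm (Fin k)) = 1 := by
  ext i
  simp [rcPerm]

lemma rcPerm_revPerm {k : ℕ} : rcPerm (Fin.revPerm : Equiv.Perm (Fin k)) = Fin.revPerm := by
  ext i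
  simp [rcPerm]

/-- A class containing permutations of all sizes contains a centrosymmetric permutation of
every even size. -/
lemma exists_centro (C : ∀ n : ℕ, Set (Equiv.Perm (Fin n))) (hC : IsPermClass C)
    (hne : ∀ N, (C N).Nonempty) (n : ℕ) :
    ∃ σ ∈ C (2 * n), rcPerm σ = σ := by
  obtain ⟨π, hπ⟩ := hne ((2 * n) * (2 * n) + 1)
  have hlt : (2 * n) * (2 * n) < (2 * n) * (2 * n) + 1 := Nat.lt_succ_self _
  rcases my_erdos_szekeres hlt π.injective with ⟨t, ht, hmono⟩ | ⟨t, ht, hanti⟩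
  · obtain ⟨u, hu, hcard⟩ := Finset.exists_subset_card_eq ht.le
    set f : Fin (2 * n) → Fin ((2 * n) * (2 * n) + 1) :=
      fun i => ((u.orderIsoOfFin hcard i : _) : Fin ((2 * n) * (2 * n) + 1)) with hf
    have hfmono : StrictMono f := fun i j hij =>
      Subtype.coe_lt_coe.mpr ((u.orderIsoOfFin hcard).lt_iff_lt.mpr hij)
    have hFmono : StrictMono (fun i => π (f i)) := fun i j hij =>
      hmono (hu (u.orderIsoOfFin hcard i).2) (hu (u.orderIsoOfFin hcard j).2) (hfmono hij)
    have hcont : PermContains π (1 : Equiv.Perm (Fin (2 * n))) := by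
      refine ⟨f, hfmono, fun i j => ?_⟩
      simp only [Equiv.Perm.one_apply]
      exact hFmono.lt_iff_lt.symm
    exact ⟨1, hC _ _ _ _ hπ hcont, rcPerm_one⟩
  · obtain ⟨u, hu, hcard⟩ := Finset.exists_subset_card_eq ht.le
    set f : Fin (2 * n) → Fin ((2 * n) * (2 * n) + 1) :=
      fun i => ((u.orderIsoOfFin hcard i : _) : Fin ((2 * n) * (2 * n) + 1)) with hf
    have hfmono : StrictMono f := fun i j hij =>
      Subtype.coe_lt_coe.mpr ((u.orderIsoOfFin hcard).lt_iff_lt.mpr hij)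
    have hFanti : StrictAnti (fun i => π (f i)) := fun i j hij =>
      hanti (hu (u.orderIsoOfFin hcard i).2) (hu (u.orderIsoOfFin hcard j).2) (hfmono hij)
    have hcont : PermContains π (Fin.revPerm : Equiv.Perm (Fin (2 * n))) := by
      refine ⟨f, hfmono, fun i j => ?_⟩
      rw [Fin.revPerm_apply, Fin.revPerm_apply, Fin.rev_lt_rev, hFanti.lt_iff_gt]
    exact ⟨Fin.revPerm, hC _ _ _ _ hπ hcont, rcPerm_revPerm⟩

/-- If the class is empty at some size, it is empty at all larger sizes. -/
lemma empty_mono (C : ∀ n : ℕ, Set (Equiv.Perm (Fin n))) (hC : IsPermClass C) {N n : ℕ}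
    (hN : C N = ∅) (hn : N ≤ n) : C n = ∅ := by
  by_contra hne
  obtain ⟨π, hπ⟩ := Set.nonempty_iff_ne_empty.mpr hne
  obtain ⟨σ, hσ⟩ := exists_pattern_of_le π hn
  exact absurd (hC _ _ _ _ hπ hσ) (by simp [hN])

theorem stmt2 (C : ∀ n : ℕ, Set (Equiv.Perm (Fin n))) (hC : IsPermClass C)
    (h : Filter.limsup (growthSeq (classCount C)) Filter.atTop = 0 ∨
         Filter.limsup (growthSeq (classCount C)) Filter.atTop = 1) :
    ∃ L : ENNReal,
      Filter.Tendsto (growthSeq (classCount C)) Filter.atTop (nhds L) ∧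
      Filter.Tendsto (growthSeq (rcCount C)) Filter.atTop (nhds L) := by
  set a := growthSeq (classCount C) with ha
  set b := growthSeq (rcCount C) with hb
  by_cases hall : ∀ N, (C N).Nonempty
  · -- all sizes nonempty: limits are 1
    refine ⟨1, ?_, ?_⟩
    · -- classCount ≥ 1 everywhere
      have hge1 : ∀ n, 1 ≤ a n := by
        intro n
        have h1 : 1 ≤ classCount C n := (Set.ncard_pos (Set.toFinite _)).mpr (hall n)
        have h1' : (1 : ENNReal) ≤ (classCount C n : ENNReal) := by exact_mod_cast h1
        calc (1 : ENNReal) = 1 ^ ((n : ℝ)⁻¹) := (ENNReal.one_rpow _).symm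
          _ ≤ _ := ENNReal.rpow_le_rpow h1' (by positivity)
      have hliminf : 1 ≤ Filter.liminf a Filter.atTop := by
        have := Filter.liminf_le_liminf (f := Filter.atTop)
          (u := fun _ : ℕ => (1 : ENNReal)) (v := a) (Filter.Eventually.of_forall hge1)
        simpa using this
      have hll : Filter.liminf a Filter.atTop ≤ Filter.limsup a Filter.atTop :=
        Filter.liminf_le_limsup
      have hlimsup : Filter.limsup a Filter.atTop = 1 := by
        rcases h with h0 | h1
        · exact absurd (hliminf.trans (hll.trans_eq h0)) (by simp)
        · exact h1
      have hliminf' : Filter.liminf a Filter.atTop = 1 :=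
        le_antisymm (hll.trans_eq hlimsup) hliminf
      exact tendsto_of_liminf_eq_limsup hliminf' hlimsup
    · have hta : Filter.Tendsto a Filter.atTop (nhds 1) := by
        -- re-derive (same as above)
        have hge1 : ∀ n, 1 ≤ a n := by
          intro n
          have h1 : 1 ≤ classCount C n := (Set.ncard_pos (Set.toFinite _)).mpr (hall n)
          have h1' : (1 : ENNReal) ≤ (classCount C n : ENNReal) := by exact_mod_cast h1
          calc (1 : ENNReal) = 1 ^ ((n : ℝ)⁻¹) := (ENNReal.one_rpow _).symm
            _ ≤ _ := ENNReal.rpow_le_rpow h1' (by positivity)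
        have hliminf : 1 ≤ Filter.liminf a Filter.atTop := by
          have := Filter.liminf_le_liminf (f := Filter.atTop)
            (u := fun _ : ℕ => (1 : ENNReal)) (v := a) (Filter.Eventually.of_forall hge1)
          simpa using this
        have hll : Filter.liminf a Filter.atTop ≤ Filter.limsup a Filter.atTop :=
          Filter.liminf_le_limsup
        have hlimsup : Filter.limsup a Filter.atTop = 1 := by
          rcases h with h0 | h1
          · exact absurd (hliminf.trans (hll.trans_eq h0)) (by simp)
          · exact h1
        have hliminf' : Filter.liminf a Filter.atTop = 1 :=
          le_antisymm (hll.trans_eq hlimsup) hliminf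
        exact tendsto_of_liminf_eq_limsup hliminf' hlimsup
      -- squeeze for b
      have hbge1 : ∀ n, 1 ≤ b n := by
        intro n
        obtain ⟨σ, hσ, hσrc⟩ := exists_centro C hC hall n
        have hne : {π ∈ C (2 * n) | rcPerm π = π}.Nonempty := ⟨σ, hσ, hσrc⟩
        have h1 : 1 ≤ rcCount C n := (Set.ncard_pos (Set.toFinite _)).mpr hne
        have h1' : (1 : ENNReal) ≤ (rcCount C n : ENNReal) := by exact_mod_cast h1
        calc (1 : ENNReal) = 1 ^ ((n : ℝ)⁻¹) := (ENNReal.one_rpow _).symm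
          _ ≤ _ := ENNReal.rpow_le_rpow h1' (by positivity)
      have hble : ∀ n, b n ≤ a (2 * n) * a (2 * n) := by
        intro n
        rcases Nat.eq_zero_or_pos n with rfl | hn
        · simp [hb, ha, growthSeq]
        have hsub : {π ∈ C (2 * n) | rcPerm π = π} ⊆ C (2 * n) := fun π hπ => hπ.1
        have hrc : (rcCount C n : ENNReal) ≤ (classCount C (2 * n) : ENNReal) := by
          exact_mod_cast Set.ncard_le_ncard hsub (Set.toFinite _)
        have hcle : (1 : ℕ) ≤ classCount C (2 * n) :=
          (Set.ncard_pos (Set.toFinite _)).mpr (hall _)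
        have hc0 : (classCount C (2 * n) : ENNReal) ≠ 0 := by
          simp only [ne_eq, Nat.cast_eq_zero]; omega
        have hctop : (classCount C (2 * n) : ENNReal) ≠ ⊤ := ENNReal.natCast_ne_top _
        have step1 : b n ≤ (classCount C (2 * n) : ENNReal) ^ ((n : ℝ)⁻¹) :=
          ENNReal.rpow_le_rpow hrc (by positivity)
        have hexp : ((n : ℝ))⁻¹ = ((2 * n : ℕ) : ℝ)⁻¹ + ((2 * n : ℕ) : ℝ)⁻¹ := by
          have hn' : (n : ℝ) ≠ 0 := Nat.cast_ne_zero.mpr hn.ne'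
          push_cast
          field_simp
          ring
        calc b n ≤ (classCount C (2 * n) : ENNReal) ^ ((n : ℝ)⁻¹) := step1
          _ = (classCount C (2 * n) : ENNReal) ^ (((2 * n : ℕ) : ℝ)⁻¹ + ((2 * n : ℕ) : ℝ)⁻¹) := by
              rw [hexp]
          _ = a (2 * n) * a (2 * n) := by
              rw [ENNReal.rpow_add _ _ hc0 hctop]; rfl
      have h2n : Filter.Tendsto (fun n : ℕ => 2 * n) Filter.atTop Filter.atTop :=
        Filter.tendsto_atTop_mono (fun n => Nat.le_mul_of_pos_left n (by norm_num))
          Filter.tendsto_id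
      have hupper : Filter.Tendsto (fun n => a (2 * n) * a (2 * n)) Filter.atTop (nhds 1) := by
        have hcomp : Filter.Tendsto (fun n => a (2 * n)) Filter.atTop (nhds 1) := hta.comp h2n
        have := ENNReal.Tendsto.mul hcomp (Or.inl one_ne_zero) hcomp (Or.inl one_ne_zero)
        simpa using this
      exact tendsto_of_tendsto_of_tendsto_of_le_of_le (f := b)
        (tendsto_const_nhds : Filter.Tendsto (fun _ : ℕ => (1:ENNReal)) Filter.atTop (nhds 1))
        hupper hbge1 hble
  · -- some size empty: limits are 0
    push_neg at hall
    obtain ⟨N, hN⟩ := hall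
    have hNempty : C N = ∅ := hN
    refine ⟨0, ?_, ?_⟩
    · have : ∀ᶠ n in Filter.atTop, a n = 0 := by
        filter_upwards [Filter.eventually_ge_atTop (N + 1)] with n hn
        have hempty : C n = ∅ := empty_mono C hC hNempty (by omega)
        have : classCount C n = 0 := by simp [classCount, hempty]
        simp only [ha, growthSeq, this, Nat.cast_zero]
        have hnpos : 0 < n := by omega
        exact ENNReal.zero_rpow_of_pos (by positivity)
      exact Filter.Tendsto.congr' (this.mono fun n hn => hn.symm) tendsto_const_nhds
    · have : ∀ᶠ n in Filter.atTop, b n = 0 := by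
        filter_upwards [Filter.eventually_ge_atTop (N + 1)] with n hn
        have hempty : C (2 * n) = ∅ := empty_mono C hC hNempty (by omega)
        have hset : {π ∈ C (2 * n) | rcPerm π = π} = ∅ := by
          rw [hempty]; simp
        have : rcCount C n = 0 := by simp [rcCount, hset]
        simp only [hb, growthSeq, this, Nat.cast_zero]
        have hnpos : 0 < n := by omega
        exact ENNReal.zero_rpow_of_pos (by positivity)
      exact Filter.Tendsto.congr' (this.mono fun n hn => hn.symm) tendsto_const_nhds
end

section
/- Let C be an rc-invariant permutation class and let σ ∈ C. The following are equivalent: (i) σ belongs to every permutation class D such that C = D ∪ rc(D) (that is, σ ∈ Ĉ); (ii) the union of {π ∈ C : π avoids σ} and {π ∈ C : π avoids rc(σ)} is not all of C; (iii) there exists π ∈ C that contains both σ and rc(σ). -/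
open Filter Topology

lemma rcPerm_apply {n : ℕ} (π : Equiv.Perm (Fin n)) (i : Fin n) :
    rcPerm π i = (π i.rev).rev := rfl

lemma rcPerm_rcPerm {n : ℕ} (π : Equiv.Perm (Fin n)) : rcPerm (rcPerm π) = π := by
  ext i; simp [rcPerm_apply, Fin.rev_rev]

lemma permContains_refl {m : ℕ} (σ : Equiv.Perm (Fin m)) : PermContains σ σ :=
  ⟨id, strictMono_id, fun _ _ => Iff.rfl⟩

lemma permContains_trans {n k m : ℕ} {π : Equiv.Perm (Fin n)} {τ : Equiv.Perm (Fin k)}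
    {σ : Equiv.Perm (Fin m)} (h1 : PermContains π τ) (h2 : PermContains τ σ) :
    PermContains π σ := by
  obtain ⟨f, hf, hf2⟩ := h1
  obtain ⟨g, hg, hg2⟩ := h2
  exact ⟨f ∘ g, hf.comp hg, fun i j => (hg2 i j).trans (hf2 _ _)⟩

lemma permContains_rc {n m : ℕ} {π : Equiv.Perm (Fin n)} {σ : Equiv.Perm (Fin m)}
    (h : PermContains π σ) : PermContains (rcPerm π) (rcPerm σ) := by
  obtain ⟨f, hf, h2⟩ := h
  refine ⟨fun i => (f i.rev).rev, fun i j hij => ?_, fun i j => ?_⟩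
  · rw [Fin.rev_lt_rev]; exact hf (Fin.rev_lt_rev.mpr hij)
  · simp only [rcPerm_apply, Fin.rev_rev, Fin.rev_lt_rev]
    exact h2 j.rev i.rev

lemma mem_rc_iff {C : ∀ n : ℕ, Set (Equiv.Perm (Fin n))} (hrc : RCInvariant C)
    {n : ℕ} {π : Equiv.Perm (Fin n)} : rcPerm π ∈ C n ↔ π ∈ C n := by
  constructor
  · intro h
    obtain ⟨ρ, hρ, hρπ⟩ := (hrc n).symm ▸ h
    have : ρ = π := by
      have := congrArg rcPerm hρπ
      rwa [rcPerm_rcPerm, rcPerm_rcPerm] at this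
    exact this ▸ hρ
  · intro h
    exact (hrc n) ▸ ⟨π, h, rfl⟩

theorem stmt3 (C : ∀ n : ℕ, Set (Equiv.Perm (Fin n))) (hC : IsPermClass C)
    (hrc : RCInvariant C) (m : ℕ) (σ : Equiv.Perm (Fin m)) (hσ : σ ∈ C m) :
    ((∀ D : ∀ n : ℕ, Set (Equiv.Perm (Fin n)), IsPermClass D →
        (∀ n : ℕ, C n = D n ∪ rcPerm '' (D n)) → σ ∈ D m) ↔
      ¬ (∀ n : ℕ, {π ∈ C n | ¬ PermContains π σ} ∪ {π ∈ C n | ¬ PermContains π (rcPerm σ)}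
          = C n)) ∧
    ((¬ (∀ n : ℕ, {π ∈ C n | ¬ PermContains π σ} ∪ {π ∈ C n | ¬ PermContains π (rcPerm σ)}
          = C n)) ↔
      ∃ (n : ℕ) (π : Equiv.Perm (Fin n)), π ∈ C n ∧ PermContains π σ ∧
        PermContains π (rcPerm σ)) :=  by
  have part2 : (¬ (∀ n : ℕ, {π ∈ C n | ¬ PermContains π σ} ∪
        {π ∈ C n | ¬ PermContains π (rcPerm σ)} = C n)) ↔
      ∃ (n : ℕ) (π : Equiv.Perm (Fin n)), π ∈ C n ∧ PermContains π σ ∧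
        PermContains π (rcPerm σ) := by
    constructor
    · intro h
      push_neg at h
      obtain ⟨n, hn⟩ := h
      have hsub : {π ∈ C n | ¬ PermContains π σ} ∪
          {π ∈ C n | ¬ PermContains π (rcPerm σ)} ⊆ C n := by
        rintro π (⟨h1, _⟩ | ⟨h1, _⟩) <;> exact h1
      obtain ⟨π, hπC, hπn⟩ := Set.exists_of_ssubset (hsub.ssubset_of_ne hn)
      refine ⟨n, π, hπC, ?_, ?_⟩
      · by_contra hcon
        exact hπn (Or.inl ⟨hπC, hcon⟩)
      · by_contra hcon
        exact hπn (Or.inr ⟨hπC, hcon⟩)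
    · rintro ⟨n, π, hπC, h1, h2⟩ hall
      have := (hall n) ▸ hπC
      rcases this with ⟨_, h⟩ | ⟨_, h⟩
      · exact h h1
      · exact h h2
  refine ⟨⟨?_, ?_⟩, part2⟩
  · intro h1 h2
    set D : ∀ n : ℕ, Set (Equiv.Perm (Fin n)) :=
      fun n => {π ∈ C n | ¬ PermContains π σ} with hD
    have hDclass : IsPermClass D := by
      rintro m' n' σ' π' ⟨hπC, hπav⟩ hcon
      exact ⟨hC _ _ _ _ hπC hcon, fun hs => hπav (permContains_trans hcon hs)⟩
    have hunion : ∀ n : ℕ, C n = D n ∪ rcPerm '' (D n) := by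
      intro n
      have himg : rcPerm '' (D n) = {π ∈ C n | ¬ PermContains π (rcPerm σ)} := by
        ext π
        constructor
        · rintro ⟨ρ, ⟨hρC, hρav⟩, rfl⟩
          refine ⟨(mem_rc_iff hrc).mpr hρC, fun hcon => hρav ?_⟩
          have := permContains_rc hcon
          rwa [rcPerm_rcPerm, rcPerm_rcPerm] at this
        · rintro ⟨hπC, hπav⟩
          refine ⟨rcPerm π, ⟨(mem_rc_iff hrc).mpr hπC, fun hcon => hπav ?_⟩,
            rcPerm_rcPerm π⟩
          · have := permContains_rc hcon
            rwa [rcPerm_rcPerm] at this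
      rw [himg, h2 n]
    have := h1 D hDclass hunion
    exact this.2 (permContains_refl σ)
  · intro h2 D hDclass hCD
    obtain ⟨n, π, hπC, hcσ, hcrc⟩ := part2.mp h2
    rcases (hCD n) ▸ hπC with hπD | ⟨ρ, hρD, hρπ⟩
    · exact hDclass _ _ _ _ hπD hcσ
    · have hρ : ρ = rcPerm π := by
        have := congrArg rcPerm hρπ
        rwa [rcPerm_rcPerm] at this
      have : PermContains ρ σ := by
        rw [hρ]
        have := permContains_rc hcrc
        rwa [rcPerm_rcPerm] at this
      exact hDclass _ _ _ _ hρD this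
end

section
/- Let A be a centrosymmetric r×c matrix with entries in {0,1,−1}, where r and c are both even, and let G be the cell graph of A with rc the graph automorphism induced by the half-turn rotation of cells. If G is a forest (contains no cycles), then rc maps every connected component of G onto a different component; that is, no connected component K of G satisfies rc(K) = K. -/
open Filter Topology

/-- The standard figure of a `{0,1,-1}`-matrix `A` (rows indexed from the bottom,
both rows and columns 0-indexed here). -/
def stdFigure {r c : ℕ} (A : Fin r → Fin c → ℤ) : Set (ℝ × ℝ) :=
  { p | ∃ (i : Fin r) (j : Fin c) (t : ℝ), 0 < t ∧ t < 1 ∧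
      ((A i j = 1 ∧ p = ((j : ℝ) + t, (i : ℝ) + t)) ∨
       (A i j = -1 ∧ p = ((j : ℝ) + t, (i : ℝ) + 1 - t))) }

/-- `π` lies in the geometric grid class of `A`. -/
def InGeom {r c n : ℕ} (A : Fin r → Fin c → ℤ) (π : Equiv.Perm (Fin n)) : Prop :=
  ∃ p : Fin n → ℝ × ℝ, (∀ k, p k ∈ stdFigure A) ∧
    StrictMono (fun k => (p k).1) ∧
    ∀ k l : Fin n, (p k).2 < (p l).2 ↔ π k < π l

/-- Two cells are related if both are nonzero, they share a row or a column, and no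
nonzero cell lies strictly between them in that row or column. -/
def cellRel {r c : ℕ} (A : Fin r → Fin c → ℤ) (v w : Fin r × Fin c) : Prop :=
  A v.1 v.2 ≠ 0 ∧ A w.1 w.2 ≠ 0 ∧
    ((v.1 = w.1 ∧ ∀ j : Fin c, min v.2 w.2 < j → j < max v.2 w.2 → A v.1 j = 0) ∨
     (v.2 = w.2 ∧ ∀ i : Fin r, min v.1 w.1 < i → i < max v.1 w.1 → A i v.2 = 0))

/-- The cell graph of `A`. -/
def cellGraph {r c : ℕ} (A : Fin r → Fin c → ℤ) : SimpleGraph (Fin r × Fin c) :=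
  SimpleGraph.fromRel (cellRel A)

/-- The half-turn rotation acting on cells. -/
def cellRC {r c : ℕ} (v : Fin r × Fin c) : Fin r × Fin c :=
  (v.1.rev, v.2.rev)

lemma rev_ne_self {n : ℕ} (hn : Even n) (i : Fin n) : i.rev ≠ i := by
  intro h
  have hv := congrArg Fin.val h
  rw [Fin.val_rev] at hv
  obtain ⟨m, hm⟩ := hn
  have := i.isLt
  omega

lemma getVert_map' {V W : Type*} {G : SimpleGraph V} {G' : SimpleGraph W}
    (f : G →g G') {u v : V} (p : G.Walk u v) (i : ℕ) :
    (p.map f).getVert i = f (p.getVert i) := by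
  induction p generalizing i with
  | nil => rfl
  | cons h p ih => cases i with
    | zero => rfl
    | succ i => exact ih i

lemma cellRC_involutive {r c : ℕ} : Function.Involutive (cellRC (r := r) (c := c)) := by
  intro v
  simp [cellRC, Fin.rev_rev]

lemma cellRel_rc {r c : ℕ} (A : Fin r → Fin c → ℤ)
    (hsym : ∀ i j, A i j = A i.rev j.rev) {v w : Fin r × Fin c}
    (h : cellRel A v w) : cellRel A (cellRC v) (cellRC w) := by
  obtain ⟨h1, h2, h3⟩ := h
  have key : ∀ i j, A i.rev j.rev = A i j := fun i j => (hsym i j).symm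
  refine ⟨by simpa [cellRC, key] using h1, by simpa [cellRC, key] using h2, ?_⟩
  rcases h3 with ⟨heq, hbet⟩ | ⟨heq, hbet⟩
  · left
    refine ⟨by simp [cellRC, heq], fun j hj1 hj2 => ?_⟩
    show A v.1.rev j = 0
    have hj : j = j.rev.rev := (Fin.rev_rev j).symm
    rw [hj, key]
    apply hbet
    · rw [min_lt_iff]
      rw [lt_max_iff] at hj2
      rcases hj2 with h' | h'
      · exact Or.inl (Fin.rev_lt_rev.mp (by simpa [cellRC, Fin.rev_rev] using h'))
      · exact Or.inr (Fin.rev_lt_rev.mp (by simpa [cellRC, Fin.rev_rev] using h'))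
    · rw [lt_max_iff]
      rw [min_lt_iff] at hj1
      rcases hj1 with h' | h'
      · exact Or.inl (Fin.rev_lt_rev.mp (by simpa [cellRC, Fin.rev_rev] using h'))
      · exact Or.inr (Fin.rev_lt_rev.mp (by simpa [cellRC, Fin.rev_rev] using h'))
  · right
    refine ⟨by simp [cellRC, heq], fun i hi1 hi2 => ?_⟩
    show A i v.2.rev = 0
    have hi : i = i.rev.rev := (Fin.rev_rev i).symm
    rw [hi, key]
    apply hbet
    · rw [min_lt_iff]
      rw [lt_max_iff] at hi2
      rcases hi2 with h' | h'
      · exact Or.inl (Fin.rev_lt_rev.mp (by simpa [cellRC, Fin.rev_rev] using h'))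
      · exact Or.inr (Fin.rev_lt_rev.mp (by simpa [cellRC, Fin.rev_rev] using h'))
    · rw [lt_max_iff]
      rw [min_lt_iff] at hi1
      rcases hi1 with h' | h'
      · exact Or.inl (Fin.rev_lt_rev.mp (by simpa [cellRC, Fin.rev_rev] using h'))
      · exact Or.inr (Fin.rev_lt_rev.mp (by simpa [cellRC, Fin.rev_rev] using h'))

lemma no_adj_rc {r c : ℕ} (hr : Even r) (hc : Even c) (A : Fin r → Fin c → ℤ)
    (x : Fin r × Fin c) : ¬ (cellGraph A).Adj (cellRC x) x := by
  intro h
  rw [cellGraph, SimpleGraph.fromRel_adj] at h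
  obtain ⟨-, h | h⟩ := h
  · obtain ⟨-, -, ⟨heq, -⟩ | ⟨heq, -⟩⟩ := h
    · exact rev_ne_self hr x.1 (by simpa [cellRC] using heq)
    · exact rev_ne_self hc x.2 (by simpa [cellRC] using heq)
  · obtain ⟨-, -, ⟨heq, -⟩ | ⟨heq, -⟩⟩ := h
    · exact rev_ne_self hr x.1 (by simpa [cellRC] using heq.symm)
    · exact rev_ne_self hc x.2 (by simpa [cellRC] using heq.symm)

theorem stmt8 (r c : ℕ) (hr : Even r) (hc : Even c) (A : Fin r → Fin c → ℤ)
    (hentries : ∀ i j, A i j = 0 ∨ A i j = 1 ∨ A i j = -1)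
    (hsym : ∀ i j, A i j = A i.rev j.rev)
    (hforest : (cellGraph A).IsAcyclic) :
    ∀ v : Fin r × Fin c,
      (cellGraph A).connectedComponentMk (cellRC v) ≠ (cellGraph A).connectedComponentMk v := by
  classical
  intro v hcomp
  have hreach : (cellGraph A).Reachable (cellRC v) v :=
    SimpleGraph.ConnectedComponent.eq.mp hcomp
  obtain ⟨w⟩ := hreach
  let p : (cellGraph A).Path (cellRC v) v := w.toPath
  let φ : cellGraph A →g cellGraph A :=
    ⟨cellRC, by
      intro a b hab
      rw [cellGraph, SimpleGraph.fromRel_adj] at hab ⊢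
      obtain ⟨hne, hrel⟩ := hab
      refine ⟨fun h => hne (cellRC_involutive.injective h), ?_⟩
      rcases hrel with h | h
      · exact Or.inl (cellRel_rc A hsym h)
      · exact Or.inr (cellRel_rc A hsym h)⟩
  have hrc2 : cellRC (cellRC v) = v := cellRC_involutive v
  let q : (cellGraph A).Walk v (cellRC v) := (p.1.map φ).copy hrc2 rfl
  have hqpath : q.reverse.IsPath := by
    apply SimpleGraph.Walk.IsPath.reverse
    rw [SimpleGraph.Walk.isPath_copy]
    exact SimpleGraph.Walk.map_isPath_of_injective cellRC_involutive.injective p.2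
  have hpq : (⟨q.reverse, hqpath⟩ : (cellGraph A).Path (cellRC v) v) = p :=
    SimpleGraph.isAcyclic_iff_path_unique.mp hforest _ _
  have hwalk : q.reverse = p.1 := congrArg Subtype.val hpq
  set n := p.1.length with hn
  have hqlen : q.length = n := by
    simp only [q, SimpleGraph.Walk.length_copy, SimpleGraph.Walk.length_map]
    exact hn.symm
  have key : ∀ i : ℕ, cellRC (p.1.getVert (n - i)) = p.1.getVert i := by
    intro i
    have h1 : q.reverse.getVert i = p.1.getVert i := by rw [hwalk]
    rw [SimpleGraph.Walk.getVert_reverse, hqlen] at h1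
    have h3 : q.getVert (n - i) = cellRC (p.1.getVert (n - i)) := by
      show ((p.1.map φ).copy hrc2 rfl).getVert (n - i) = _
      rw [SimpleGraph.Walk.getVert_copy, getVert_map']
      rfl
    rw [h3] at h1
    exact h1
  have hn0 : n ≠ 0 := by
    intro h0
    have h1 : p.1.getVert 0 = cellRC v := SimpleGraph.Walk.getVert_zero p.1
    have h2 : p.1.getVert n = v := by rw [hn]; exact SimpleGraph.Walk.getVert_length p.1
    rw [h0] at h2
    rw [h2] at h1
    exact rev_ne_self hr v.1 (congrArg Prod.fst h1.symm)
  rcases Nat.even_or_odd n with ⟨k, hk⟩ | ⟨k, hk⟩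
  · have hkey := key k
    rw [show n - k = k by omega] at hkey
    exact rev_ne_self hr (p.1.getVert k).1 (congrArg Prod.fst hkey)
  · have hadj := p.1.adj_getVert_succ (show k < n by omega)
    have hkey := key (k + 1)
    rw [show n - (k + 1) = k by omega] at hkey
    rw [← hkey] at hadj
    exact no_adj_rc hr hc A _ hadj.symm
end

section
/- If C is a sum closed, rc-invariant permutation class, then liminf_{n→∞} |C^rc_{2n}|^{1/n} ≥ limsup_{n→∞} |C_n|^{1/n} (that is, the lower rc-growth rate of C is at least the growth rate of C). -/
open Filter Topology

/-- The direct sum `σ ⊕ τ` of two permutations. -/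
def sumPerm {a b : ℕ} (σ : Equiv.Perm (Fin a)) (τ : Equiv.Perm (Fin b)) :
    Equiv.Perm (Fin (a + b)) :=
  (finSumFinEquiv.symm.trans (Equiv.sumCongr σ τ)).trans finSumFinEquiv

/-- A class is sum closed if it is closed under `⊕`. -/
def SumClosed (C : ∀ n : ℕ, Set (Equiv.Perm (Fin n))) : Prop :=
  ∀ (a b : ℕ) (σ : Equiv.Perm (Fin a)) (τ : Equiv.Perm (Fin b)),
    σ ∈ C a → τ ∈ C b → sumPerm σ τ ∈ C (a + b)

/-- Transport a permutation along an equality of sizes. -/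
def permCast {m n : ℕ} (h : m = n) (π : Equiv.Perm (Fin m)) : Equiv.Perm (Fin n) :=
  ((finCongr h).symm.trans π).trans (finCongr h)

/-- A permutation is sum-indecomposable if it is not the sum of two permutations of
nonzero size. -/
def SumIndecomposable {n : ℕ} (π : Equiv.Perm (Fin n)) : Prop :=
  ¬ ∃ (a b : ℕ) (σ : Equiv.Perm (Fin a)) (τ : Equiv.Perm (Fin b)) (h : a + b = n),
      0 < a ∧ 0 < b ∧ π = permCast h (sumPerm σ τ)

/-- `|ind(C)_n|`, the number of sum-indecomposable permutations of size `n` in `C`. -/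
noncomputable def indCount (C : ∀ n : ℕ, Set (Equiv.Perm (Fin n))) (n : ℕ) : ℕ :=
  {π ∈ C n | SumIndecomposable π}.ncard

/-- `|ind(C)^rc_{2k}|`, the number of centrosymmetric sum-indecomposable permutations of
size `2k` in `C`. -/
noncomputable def indRcCount (C : ∀ n : ℕ, Set (Equiv.Perm (Fin n))) (k : ℕ) : ℕ :=
  {π ∈ C (2 * k) | SumIndecomposable π ∧ rcPerm π = π}.ncard

lemma permCast_rfl {n : ℕ} (π : Equiv.Perm (Fin n)) : permCast rfl π = π := by
  ext i; simp [permCast]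

lemma rcPerm_permCast {m n : ℕ} (h : m = n) (π : Equiv.Perm (Fin m)) :
    rcPerm (permCast h π) = permCast h (rcPerm π) := by
  subst h; rw [permCast_rfl, permCast_rfl]

lemma permCast_injective {m n : ℕ} (h : m = n) : Function.Injective (permCast h) := by
  subst h; intro a b hab; rwa [permCast_rfl, permCast_rfl] at hab

lemma rcPerm_mem {C : ∀ n : ℕ, Set (Equiv.Perm (Fin n))} (hrc : RCInvariant C)
    {n : ℕ} {π : Equiv.Perm (Fin n)} (h : π ∈ C n) : rcPerm π ∈ C n := by
  rw [← hrc n]; exact ⟨π, h, rfl⟩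

lemma permCast_mem (C : ∀ n : ℕ, Set (Equiv.Perm (Fin n))) {m n : ℕ} (h : m = n)
    {π : Equiv.Perm (Fin m)} (hπ : π ∈ C m) : permCast h π ∈ C n := by
  subst h; rwa [permCast_rfl]

lemma sumPerm_val {a b : ℕ} (σ : Equiv.Perm (Fin a)) (τ : Equiv.Perm (Fin b))
    (k : Fin (a + b)) :
    ((sumPerm σ τ k : Fin (a+b)) : ℕ) =
      if h : (k : ℕ) < a then (σ ⟨k, h⟩ : ℕ) else a + (τ ⟨(k : ℕ) - a, by omega⟩ : ℕ) := by
  induction k using Fin.addCases with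
  | left i =>
      simp only [sumPerm, Equiv.trans_apply, finSumFinEquiv_symm_apply_castAdd,
        Equiv.sumCongr_apply, Sum.map_inl, finSumFinEquiv_apply_left, Fin.coe_castAdd]
      rw [dif_pos i.isLt]
  | right j =>
      simp only [sumPerm, Equiv.trans_apply, finSumFinEquiv_symm_apply_natAdd,
        Equiv.sumCongr_apply, Sum.map_inr, finSumFinEquiv_apply_right, Fin.coe_natAdd]
      rw [dif_neg (by omega)]
      congr 2
      ext
      simp

lemma rcPerm_val {n : ℕ} (π : Equiv.Perm (Fin n)) (k : Fin n) :
    ((rcPerm π k : Fin n) : ℕ) = n - 1 - (π (Fin.rev k) : ℕ) := by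
  simp [rcPerm, Fin.rev]; omega

lemma rc_triple {a c : ℕ} (σ : Equiv.Perm (Fin a)) (π : Equiv.Perm (Fin c)) :
    rcPerm (sumPerm (sumPerm σ π) (rcPerm σ)) = sumPerm (sumPerm σ (rcPerm π)) (rcPerm σ) := by
  ext k
  have hk := k.isLt
  simp only [rcPerm_val, sumPerm_val, Fin.val_rev]
  split_ifs <;> try omega
  · have e3 : Fin.rev (⟨(k:ℕ) - (a + c), by omega⟩ : Fin a) = ⟨a + c + a - ((k:ℕ)+1), by omega⟩ := by
      apply Fin.ext; simp [Fin.val_rev]; omega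
    rw [e3]
    have := (σ ⟨a + c + a - ((k:ℕ)+1), by omega⟩).isLt
    omega
  · have e1 : Fin.rev (⟨(k:ℕ) - a, by omega⟩ : Fin c) = ⟨a + c + a - ((k:ℕ)+1) - a, by omega⟩ := by
      apply Fin.ext; simp [Fin.val_rev]; omega
    rw [e1]
    have := (π ⟨a + c + a - ((k:ℕ)+1) - a, by omega⟩).isLt
    omega
  · have e2 : Fin.rev (⟨a + c + a - ((k:ℕ)+1) - (a + c), by omega⟩ : Fin a) = ⟨(k:ℕ), by omega⟩ := by
      apply Fin.ext; simp [Fin.val_rev]; omega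
    rw [e2]
    have := (σ ⟨(k:ℕ), by omega⟩).isLt
    omega

lemma sumPerm_inj {a b : ℕ} {σ σ' : Equiv.Perm (Fin a)} {τ τ' : Equiv.Perm (Fin b)}
    (h : sumPerm σ τ = sumPerm σ' τ') : σ = σ' ∧ τ = τ' := by
  have h2 : ∀ x, Equiv.sumCongr σ τ x = Equiv.sumCongr σ' τ' x := by
    intro x
    have := congrArg (fun e => finSumFinEquiv.symm ((e : Equiv.Perm (Fin (a+b))) (finSumFinEquiv x))) h
    simpa [sumPerm] using this
  constructor
  · ext i
    have := h2 (Sum.inl i)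
    simp only [Equiv.sumCongr_apply, Sum.map_inl] at this
    exact congrArg Fin.val (Sum.inl.inj this)
  · ext j
    have := h2 (Sum.inr j)
    simp only [Equiv.sumCongr_apply, Sum.map_inr] at this
    exact congrArg Fin.val (Sum.inr.inj this)

/-- every permutation of size `n` contains a pattern of each size `m ≤ n` -/
lemma pattern_extract {m n : ℕ} (hmn : m ≤ n) (π : Equiv.Perm (Fin n)) :
    ∃ σ : Equiv.Perm (Fin m), PermContains π σ := by
  classical
  set f : Fin m → Fin n := Fin.castLE hmn with hf
  have hfmono : StrictMono f := fun i j hij => by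
    simp only [hf, Fin.lt_def, Fin.coe_castLE]
    exact hij
  set v : Fin m → Fin n := fun i => π (f i) with hv
  have hvinj : Function.Injective v := fun i j hij => by
    have := π.injective hij
    exact hfmono.injective this
  set S : Finset (Fin n) := Finset.image v Finset.univ with hS
  have hcard : S.card = m := by
    rw [hS, Finset.card_image_of_injective _ hvinj, Finset.card_univ, Fintype.card_fin]
  let e := S.orderIsoOfFin hcard
  have hmem : ∀ i, v i ∈ S := fun i => Finset.mem_image_of_mem _ (Finset.mem_univ i)
  set g : Fin m → Fin m := fun i => e.symm ⟨v i, hmem i⟩ with hg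
  have hginj : Function.Injective g := by
    intro i j hij
    apply hvinj
    have h3 : (⟨v i, hmem i⟩ : {x // x ∈ S}) = ⟨v j, hmem j⟩ := by
      rw [← OrderIso.apply_symm_apply e ⟨v i, hmem i⟩, ← OrderIso.apply_symm_apply e ⟨v j, hmem j⟩]
      exact congrArg e hij
    exact Subtype.ext_iff.mp h3
  have hgbij : Function.Bijective g := Finite.injective_iff_bijective.mp hginj
  refine ⟨Equiv.ofBijective g hgbij, f, hfmono, fun i j => ?_⟩
  show g i < g j ↔ _
  rw [hg]
  simp only []
  rw [OrderIso.lt_iff_lt, Subtype.mk_lt_mk]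

lemma ncard_prod' {α β : Type*} (s : Set α) (t : Set β) :
    (s ×ˢ t).ncard = s.ncard * t.ncard := by
  have h : Nat.card ↥(s ×ˢ t) = Nat.card ↥s * Nat.card ↥t := by
    rw [Nat.card_congr (Equiv.Set.prod s t), Nat.card_prod]
  simpa [Nat.card_coe_set_eq] using h

lemma key_count {C : ∀ n : ℕ, Set (Equiv.Perm (Fin n))} (hsum : SumClosed C)
    (hrc : RCInvariant C) (a k : ℕ) :
    classCount C a * rcCount C k ≤ rcCount C (a + k) := by
  classical
  have hcast : a + 2 * k + a = 2 * (a + k) := by omega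
  set F : Equiv.Perm (Fin a) × Equiv.Perm (Fin (2 * k)) → Equiv.Perm (Fin (2 * (a + k))) :=
    fun p => permCast hcast (sumPerm (sumPerm p.1 p.2) (rcPerm p.1)) with hF
  have hFinj : Function.Injective F := by
    intro p q hpq
    have h1 := permCast_injective hcast hpq
    obtain ⟨h2, h3⟩ := sumPerm_inj h1
    obtain ⟨h4, h5⟩ := sumPerm_inj h2
    exact Prod.ext h4 h5
  set T : Set (Equiv.Perm (Fin (2 * k))) := {π ∈ C (2 * k) | rcPerm π = π} with hT
  have himg : F '' (C a ×ˢ T) ⊆ {π ∈ C (2 * (a + k)) | rcPerm π = π} := by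
    rintro - ⟨⟨σ, π⟩, ⟨hσ, hπ, hπrc⟩, rfl⟩
    constructor
    · exact permCast_mem C hcast (hsum _ _ _ _ (hsum _ _ _ _ hσ hπ) (rcPerm_mem hrc hσ))
    · rw [hF]
      simp only []
      rw [rcPerm_permCast, rc_triple, hπrc]
  calc classCount C a * rcCount C k = (C a ×ˢ T).ncard := (ncard_prod' _ _).symm
    _ = (F '' (C a ×ˢ T)).ncard := (Set.ncard_image_of_injective _ hFinj).symm
    _ ≤ rcCount C (a + k) := Set.ncard_le_ncard himg (Set.toFinite _)

lemma rcCount_zero_pos {C : ∀ n : ℕ, Set (Equiv.Perm (Fin n))} (h0 : (C 0).Nonempty) :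
    1 ≤ rcCount C 0 := by
  have hne : {π ∈ C (2 * 0) | rcPerm π = π}.Nonempty := by
    obtain ⟨π, hπ⟩ := h0
    refine ⟨π, hπ, ?_⟩
    have : Subsingleton (Equiv.Perm (Fin (2*0))) := by
      rw [Nat.mul_zero]; infer_instance
    exact Subsingleton.elim _ _
  exact Set.ncard_pos (Set.toFinite _) |>.mpr hne

lemma rcCount_chain {C : ∀ n : ℕ, Set (Equiv.Perm (Fin n))} (hsum : SumClosed C)
    (hrc : RCInvariant C) (hne : ∀ n, (C n).Nonempty) (m : ℕ) :
    ∀ q r : ℕ, classCount C m ^ q ≤ rcCount C (q * m + r) := by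
  intro q
  induction q with
  | zero =>
      intro r
      have h1 := key_count hsum hrc r 0
      have h2 : 1 ≤ classCount C r :=
        (Set.ncard_pos (Set.toFinite _)).mpr (hne r)
      have h3 := rcCount_zero_pos (hne 0)
      have h4 : 1 * 1 ≤ classCount C r * rcCount C 0 := Nat.mul_le_mul h2 h3
      simpa using le_trans h4 (by simpa using h1)
  | succ q ih =>
      intro r
      have h1 := key_count hsum hrc m (q * m + r)
      have h2 : m + (q * m + r) = (q+1) * m + r := by ring
      calc classCount C m ^ (q+1) = classCount C m * classCount C m ^ q := by ring
        _ ≤ classCount C m * rcCount C (q * m + r) := Nat.mul_le_mul_left _ (ih r)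
        _ ≤ rcCount C (m + (q * m + r)) := h1
        _ = rcCount C ((q+1) * m + r) := by rw [h2]

theorem stmt11 (C : ∀ n : ℕ, Set (Equiv.Perm (Fin n))) (hC : IsPermClass C)
    (hsum : SumClosed C) (hrc : RCInvariant C) :
    Filter.limsup (growthSeq (classCount C)) Filter.atTop ≤
      Filter.liminf (growthSeq (rcCount C)) Filter.atTop := by
  classical
  by_cases hP : ∀ n, (C n).Nonempty
  · set L := Filter.liminf (growthSeq (rcCount C)) Filter.atTop with hL
    have key : ∀ m : ℕ, 1 ≤ m → growthSeq (classCount C) m ≤ L := by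
      intro m hm
      set c₀ : NNReal := (classCount C m : NNReal) with hc₀def
      have hc1 : 1 ≤ classCount C m := (Set.ncard_pos (Set.toFinite _)).mpr (hP m)
      have hc₀ : c₀ ≠ 0 := by
        simp only [hc₀def, ne_eq, Nat.cast_eq_zero]
        omega
      have hcoe : ((c₀ : ENNReal)) = ((classCount C m : ℕ) : ENNReal) := by
        simp [hc₀def]
      have hbound : ∀ n : ℕ, 1 ≤ n →
          (c₀ : ENNReal) ^ (((n / m : ℕ) : ℝ) * (n : ℝ)⁻¹) ≤ growthSeq (rcCount C) n := by
        intro n hn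
        have hchain := rcCount_chain hsum hrc hP m (n / m) (n % m)
        have hnm : n / m * m + n % m = n := Nat.div_add_mod' n m
        rw [hnm] at hchain
        have hcast : ((classCount C m : ℕ) : ENNReal) ^ (n / m) ≤ ((rcCount C n : ℕ) : ENNReal) := by
          exact_mod_cast hchain
        have h2 := ENNReal.rpow_le_rpow hcast (by positivity : (0:ℝ) ≤ (n : ℝ)⁻¹)
        rw [← ENNReal.rpow_natCast ((classCount C m : ℕ) : ENNReal) (n / m),
          ← ENNReal.rpow_mul] at h2
        rw [hcoe]
        exact h2
      -- the exponent sequence tends to 1/m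
      have hm' : (0:ℝ) < (m:ℝ) := by exact_mod_cast hm
      have hα : Filter.Tendsto (fun n : ℕ => ((n / m : ℕ) : ℝ) * (n : ℝ)⁻¹)
          Filter.atTop (nhds ((m:ℝ)⁻¹)) := by
        have hlow : Filter.Tendsto (fun n : ℕ => (m:ℝ)⁻¹ - (n:ℝ)⁻¹) Filter.atTop
            (nhds ((m:ℝ)⁻¹)) := by
          simpa using (tendsto_inv_atTop_nhds_zero_nat (𝕜 := ℝ)).const_sub ((m:ℝ)⁻¹)
        refine tendsto_of_tendsto_of_tendsto_of_le_of_le' hlow tendsto_const_nhds ?_ ?_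
        · filter_upwards [Filter.eventually_ge_atTop 1] with n hn
          have hn' : (0:ℝ) < (n:ℝ) := by exact_mod_cast hn
          have h2 : (n:ℝ) < ((n/m : ℕ):ℝ) * (m:ℝ) + (m:ℝ) := by
            have h := Nat.lt_div_mul_add (a := n) (Nat.lt_of_lt_of_le Nat.zero_lt_one hm)
            exact_mod_cast h
          have h3 : (m:ℝ)⁻¹ ≤ (((n/m:ℕ):ℝ) + 1) * (n:ℝ)⁻¹ := by
            rw [← div_eq_mul_inv, ← one_div, div_le_div_iff₀ hm' hn']
            linarith
          have h4 : (((n/m:ℕ):ℝ) + 1) * (n:ℝ)⁻¹ = ((n/m:ℕ):ℝ) * (n:ℝ)⁻¹ + (n:ℝ)⁻¹ := by ring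
          linarith
        · filter_upwards [Filter.eventually_ge_atTop 1] with n hn
          have hn' : (0:ℝ) < (n:ℝ) := by exact_mod_cast hn
          have h1' : ((n/m : ℕ):ℝ) * (m:ℝ) ≤ (n:ℝ) := by exact_mod_cast Nat.div_mul_le_self n m
          rw [← div_eq_mul_inv, ← one_div, div_le_div_iff₀ hn' hm']
          linarith
      have htend : Filter.Tendsto (fun n : ℕ => (c₀ : ENNReal) ^ (((n / m : ℕ):ℝ) * (n:ℝ)⁻¹))
          Filter.atTop (nhds ((c₀ : ENNReal) ^ ((m:ℝ)⁻¹))) := by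
        have h1 : Filter.Tendsto (fun n : ℕ => (c₀ ^ (((n / m : ℕ):ℝ) * (n:ℝ)⁻¹) : NNReal))
            Filter.atTop (nhds (c₀ ^ ((m:ℝ)⁻¹))) :=
          Filter.Tendsto.nnrpow tendsto_const_nhds hα (Or.inl hc₀)
        have h2 := ENNReal.tendsto_coe.mpr h1
        simpa only [ENNReal.coe_rpow_of_ne_zero hc₀] using h2
      have hliminf : (c₀ : ENNReal) ^ ((m:ℝ)⁻¹) ≤ L := by
        rw [← htend.liminf_eq]
        exact Filter.liminf_le_liminf (Filter.eventually_atTop.mpr ⟨1, hbound⟩)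
      rw [growthSeq, ← hcoe]
      exact hliminf
    calc Filter.limsup (growthSeq (classCount C)) Filter.atTop
        ≤ Filter.limsup (fun _ => L) Filter.atTop :=
          Filter.limsup_le_limsup (Filter.eventually_atTop.mpr ⟨1, key⟩)
      _ = L := Filter.limsup_const L
  · push_neg at hP
    obtain ⟨n₀, hn₀⟩ := hP
    have hempty : ∀ n, n₀ ≤ n → classCount C n = 0 := by
      intro n hn
      rw [classCount, Set.ncard_eq_zero (Set.toFinite _)]
      by_contra hne
      obtain ⟨π, hπ⟩ := Set.nonempty_iff_ne_empty.mpr hne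
      obtain ⟨σ, hσ⟩ := pattern_extract hn π
      have hmem := hC _ _ _ _ hπ hσ
      rw [hn₀] at hmem
      exact hmem
    have hev : ∀ᶠ n in Filter.atTop, growthSeq (classCount C) n ≤ (0 : ENNReal) := by
      filter_upwards [Filter.eventually_ge_atTop (max n₀ 1)] with n hn
      have h0 := hempty n (le_trans (le_max_left _ _) hn)
      have hn1 : 1 ≤ n := le_trans (le_max_right _ _) hn
      have : growthSeq (classCount C) n = 0 := by
        rw [growthSeq, h0]
        push_cast
        exact ENNReal.zero_rpow_of_pos (by positivity)
      simp [this]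
    calc Filter.limsup (growthSeq (classCount C)) Filter.atTop
        ≤ Filter.limsup (fun _ => (0:ENNReal)) Filter.atTop := Filter.limsup_le_limsup hev
      _ = 0 := Filter.limsup_const 0
      _ ≤ _ := zero_le
end
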